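/- arXiv:2602.14994 — 2 statements merged into one kernel-verified Lean document; each statement's English description precedes it below -/
import Mathlib

section
/- Equivalence of the two definitions of primary cause: define PrimCause' (via contribution) of φ as a pair (a, p) such that for the achievement index k of φ: p < k, ¬φ at the index of p, and (a,p) is a direct cause of some context γᵢ in the prefix up to k; define CausesDirPrim (foundational) as a pair (a,p) that is a direct cause of some context γⱼ in the prefix up to k. Then under mutual exclusivity of contexts and uniqueness of the achievement index, any pair satisfying PrimCause' and any pair satisfying CausesDirPrim coincide: a₁ = a₂ and p₁ = p₂. -/
/-- `k` is the achievement index of `φ` up to `n`. -/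
def AchvIdx (φ : ℕ → Prop) (n k : ℕ) : Prop :=
  (∀ j, k ≤ j → j ≤ n → φ j) ∧ ∀ k' < k, ¬ (∀ j, k' ≤ j → j ≤ n → φ j)

/-- Position `p` is a direct cause of context `γ i` in the prefix up to `k`. -/
def DirCauseCtx {m : ℕ} (γ : Fin m → ℕ → Prop) (i : Fin m) (p k : ℕ) : Prop :=
  p < k ∧ ¬ γ i p ∧ ∀ j, p < j → j ≤ k → γ i j

theorem prim_cause_defs_equivalent {A : Type*} {m : ℕ} (s : List A) (n : ℕ)
    (φ : ℕ → Prop) (γ : Fin m → ℕ → Prop)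
    (mutex : ∀ i j l, γ i l → γ j l → i = j)
    (k : ℕ) (hach : AchvIdx φ n k)
    (a₁ a₂ : A) (p₁ p₂ : ℕ)
    -- PrimCause' (via contribution)
    (h₁ : ¬ φ p₁ ∧ s[p₁]? = some a₁ ∧ ∃ i, DirCauseCtx γ i p₁ k)
    -- CausesDirPrim (foundational)
    (h₂ : s[p₂]? = some a₂ ∧ ∃ j, DirCauseCtx γ j p₂ k) :
    a₁ = a₂ ∧ p₁ = p₂ := by
  obtain ⟨-, hg1, i, hp1, hni, hall1⟩ := h₁
  obtain ⟨hg2, j, hp2, hnj, hall2⟩ := h₂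
  have hik : γ i k := hall1 k hp1 le_rfl
  have hjk : γ j k := hall2 k hp2 le_rfl
  have hij : i = j := mutex i j k hik hjk
  subst hij
  have hpp : p₁ = p₂ := by
    rcases lt_trichotomy p₁ p₂ with h | h | h
    · exact absurd (hall1 p₂ h hp2.le) hnj
    · exact h
    · exact absurd (hall2 p₁ h hp1.le) hni
  subst hpp
  rw [hg1] at hg2
  exact ⟨Option.some_inj.mp hg2, rfl⟩
end

section
/- Failure of the naive but-for test (existence of preemption): there exists a transition system with a fluent F, a scenario s in which an action a at position p is the (unique) cause of F holding at the end of s, and a counterfactual executable scenario s' obtained from s by replacing a at p with a noOp, such that F still holds at the end of s'. -/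
/-- Failure of the naive but-for test: there exists a transition system, a
scenario `s` in which `a` at position `p` is the direct cause of `F` at the
end of `s`, and an executable counterfactual scenario `s.set p noOp` in which
`F` still holds at the end. -/
theorem naive_but_for_fails :
    ∃ (State Action : Type) (noOp : Action)
      (Poss : Action → State → Prop) (step : Action → State → State)
      (init : State) (F : State → Prop) (s : List Action) (p : ℕ) (a : Action),
      (∀ σ, Poss noOp σ) ∧
      (∀ σ, step noOp σ = σ) ∧
      -- the scenario s is executable
      (∀ i, ∀ hi : i < s.length,
        Poss (s.get ⟨i, hi⟩) ((s.take i).foldl (fun σ b => step b σ) init)) ∧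
      -- a at position p is the direct cause of F in s
      p < s.length ∧ s[p]? = some a ∧
      ¬ F ((s.take p).foldl (fun σ b => step b σ) init) ∧
      (∀ j, p < j → j ≤ s.length → F ((s.take j).foldl (fun σ b => step b σ) init)) ∧
      -- the counterfactual scenario (a at p replaced by noOp) is executable
      (∀ i, ∀ hi : i < (s.set p noOp).length,
        Poss ((s.set p noOp).get ⟨i, hi⟩)
          (((s.set p noOp).take i).foldl (fun σ b => step b σ) init)) ∧
      -- and F still holds at the end of the counterfactual scenario
      F ((s.set p noOp).foldl (fun σ b => step b σ) init) := by
  refine ⟨Bool, Bool, false, fun _ _ => True, fun b σ => b || σ, false, (· = true),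
    [true, true], 0, true, fun _ => trivial, fun σ => rfl, fun _ _ => trivial, ?_, rfl, ?_, ?_, fun _ _ => trivial, rfl⟩
  · decide
  · decide
  · intro j hj hj2
    simp only [List.length] at hj2
    interval_cases j <;> rfl
end
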